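/- If a measure-preserving system (X, B, μ, f) with f a measurable map and μ a non-singular probability measure is exact (i.e., for every n ≥ 0, if A ∈ B satisfies f^{-n}(f^n(A)) = A for all n, then μ(A) = 0 or 1), then the product system (X × X, μ × μ, f × f) is ergodic. -/
import Mathlib


open MeasureTheory Set

/-- If a non-singular probability system is exact, then the product system is ergodic. -/
theorem exact_implies_product_ergodic
    {X : Type*} [MeasurableSpace X] (μ : Measure X) [IsProbabilityMeasure μ]
    (f : X → X) (hf : Measurable f)
    (hns : ∀ A : Set X, MeasurableSet A → (μ A = 0 ↔ μ (f ⁻¹' A) = 0))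
    (hexact : ∀ A : Set X, MeasurableSet A →
      (∀ n : ℕ, f^[n] ⁻¹' (f^[n] '' A) = A) → μ A = 0 ∨ μ A = 1) :
    ∀ U : Set (X × X), MeasurableSet U → (Prod.map f f) ⁻¹' U = U →
      (μ.prod μ) U = 0 ∨ (μ.prod μ) U = 1 := by
  intro U hU hinv
  -- iterated invariance
  have hinvn : ∀ n : ℕ, (Prod.map f f)^[n] ⁻¹' U = U := by
    intro n
    induction n with
    | zero => simp
    | succ n ih =>
      rw [Function.iterate_succ', Set.preimage_comp, hinv, ih]
  -- pointwise saturation of U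
  have hsat : ∀ (n : ℕ) (p q : X × X), (Prod.map f f)^[n] p = (Prod.map f f)^[n] q →
      p ∈ U → q ∈ U := by
    intro n p q hpq hp
    have hp' : (Prod.map f f)^[n] p ∈ U := by
      rw [← hinvn n] at hp; exact hp
    rw [hpq] at hp'
    rw [← hinvn n]
    exact hp'
  have hiter : ∀ (n : ℕ) (p : X × X), (Prod.map f f)^[n] p = (f^[n] p.1, f^[n] p.2) := by
    intro n p
    rw [Prod.map_iterate]
    rfl
  -- sections
  set A : X → Set X := fun x => Prod.mk x ⁻¹' U with hA
  have hAsec : ∀ x n, f^[n] ⁻¹' (f^[n] '' A x) = A x := by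
    intro x n
    apply Subset.antisymm
    · rintro y' hy'
      obtain ⟨y, hy, hyy⟩ := hy'
      exact hsat n (x, y) (x, y') (by rw [hiter, hiter]; simp [hyy]) hy
    · exact Set.subset_preimage_image _ _
  have hAmeas : ∀ x, MeasurableSet (A x) := fun x => measurable_prodMk_left hU
  have hA01 : ∀ x, μ (A x) = 0 ∨ μ (A x) = 1 := fun x =>
    hexact (A x) (hAmeas x) (hAsec x)
  -- sections are constant on fibers
  have hAeq : ∀ (n : ℕ) (x x' : X), f^[n] x = f^[n] x' → A x = A x' := by
    intro n x x' hxx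
    apply Subset.antisymm
    · intro y hy
      exact hsat n (x, y) (x', y) (by rw [hiter, hiter]; simp [hxx]) hy
    · intro y hy
      exact hsat n (x', y) (x, y) (by rw [hiter, hiter]; simp [hxx]) hy
  -- the set of full sections
  set S : Set X := {x | μ (A x) = 1} with hS
  have hSmeas : MeasurableSet S :=
    (measurable_measure_prodMk_left hU) (measurableSet_singleton 1)
  have hSsat : ∀ n : ℕ, f^[n] ⁻¹' (f^[n] '' S) = S := by
    intro n
    apply Subset.antisymm
    · rintro x' hx'
      obtain ⟨x, hx, hxx⟩ := hx'
      show μ (A x') = 1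
      rw [← hAeq n x x' hxx]
      exact hx
    · exact Set.subset_preimage_image _ _
  have hS01 : μ S = 0 ∨ μ S = 1 := hexact S hSmeas hSsat
  -- compute the product measure
  have hprod : (μ.prod μ) U = μ S := by
    rw [Measure.prod_apply hU]
    have : (fun x => μ (Prod.mk x ⁻¹' U)) = S.indicator (fun _ => 1) := by
      funext x
      by_cases hx : x ∈ S
      · rw [Set.indicator_of_mem hx]; exact hx
      · rw [Set.indicator_of_notMem hx]
        rcases hA01 x with h | h
        · exact h
        · exact absurd h hx
    rw [this]
    exact lintegral_indicator_one hSmeas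
  rw [hprod]
  exact hS01
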